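/- Higher order singular value decomposition (HOSVD) existence: every complex tensor 𝒜 of order m and dimensions I₁×I₂×…×I_m can be written as 𝒜 = 𝒮 ×₁ U⁽¹⁾ ×₂ U⁽²⁾ ×₃ … ×_m U⁽ᵐ⁾, where each U⁽ᵏ⁾ is a unitary I_k×I_k complex matrix and the core tensor 𝒮 ∈ ℂ^{I₁×…×I_m} satisfies: (i) all-orthogonality: for every mode k and every α ≠ β, the subtensors 𝒮_{i_k=α} and 𝒮_{i_k=β} have zero inner product; (ii) ordering: for every mode k, ‖𝒮_{i_k=1}‖_F ≥ ‖𝒮_{i_k=2}‖_F ≥ … ≥ ‖𝒮_{i_k=I_k}‖_F ≥ 0. -/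

import Mathlib

open scoped BigOperators ComplexConjugate

noncomputable section

/-- The mode-`k` product of an order-`m` complex tensor `A` (with dimensions `I 0 × ⋯ × I (m-1)`)
with a matrix `B ∈ ℂ^{I k × I k}`: the entry at the multi-index obtained by replacing the
`k`-th index by `j` is `∑ i_k, A(i₁,…,i_k,…,i_m) * B(j, i_k)`. -/
def modeMul {m : ℕ} {I : Fin m → ℕ}
    (A : ((k : Fin m) → Fin (I k)) → ℂ) (k : Fin m)
    (B : Matrix (Fin (I k)) (Fin (I k)) ℂ) :
    ((k : Fin m) → Fin (I k)) → ℂ :=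
  fun i => ∑ x : Fin (I k), A (Function.update i k x) * B (i k) x

/-- `S ×₁ U⁽¹⁾ ×₂ U⁽²⁾ ×₃ ⋯ ×ₘ U⁽ᵐ⁾` : successive mode-`k` products for `k = 1, …, m`. -/
def multiModeMul {m : ℕ} {I : Fin m → ℕ}
    (S : ((k : Fin m) → Fin (I k)) → ℂ)
    (U : (k : Fin m) → Matrix (Fin (I k)) (Fin (I k)) ℂ) :
    ((k : Fin m) → Fin (I k)) → ℂ :=
  (List.finRange m).foldl (fun T k => modeMul T k (U k)) S

/-- Inner product of the subtensors `S_{i_k = α}` and `S_{i_k = β}` (the `k`-th index fixed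
to `α` resp. `β`): `∑ conj (S i) * S j` over pairs of multi-indices agreeing outside mode `k`. -/
def sliceInner {m : ℕ} {I : Fin m → ℕ}
    (S : ((k : Fin m) → Fin (I k)) → ℂ) (k : Fin m) (α β : Fin (I k)) : ℂ :=
  ∑ i ∈ Finset.univ.filter (fun i : (k : Fin m) → Fin (I k) => i k = α),
    conj (S i) * S (Function.update i k β)

/-- Squared Frobenius norm of the subtensor `S_{i_k = α}`. -/
def sliceNormSq {m : ℕ} {I : Fin m → ℕ}
    (S : ((k : Fin m) → Fin (I k)) → ℂ) (k : Fin m) (α : Fin (I k)) : ℝ :=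
  ∑ i ∈ Finset.univ.filter (fun i : (k : Fin m) → Fin (I k) => i k = α), ‖S i‖ ^ 2

/-- Frobenius norm of the subtensor `S_{i_k = α}`; for a core tensor these are the
tensor singular values `σ_α^{(k)}`. -/
def sliceNorm {m : ℕ} {I : Fin m → ℕ}
    (S : ((k : Fin m) → Fin (I k)) → ℂ) (k : Fin m) (α : Fin (I k)) : ℝ :=
  Real.sqrt (sliceNormSq S k α)

namespace HosvdAux

variable {m : ℕ} {I : Fin m → ℕ}

/-- split equivalence in mode `k` -/
def spl (I : Fin m → ℕ) (k : Fin m) :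
    ((j : Fin m) → Fin (I j)) ≃ Fin (I k) × ((j : {j // j ≠ k}) → Fin (I j)) :=
  Equiv.piSplitAt k (fun j => Fin (I j))

lemma spl_symm_same (k : Fin m) (x : Fin (I k)) (r) :
    (spl I k).symm (x, r) k = x := by
  simp [spl, Equiv.piSplitAt_symm_apply]

lemma spl_symm_ne (k : Fin m) (x : Fin (I k)) (r) {j : Fin m} (h : j ≠ k) :
    (spl I k).symm (x, r) j = r ⟨j, h⟩ := by
  simp [spl, Equiv.piSplitAt_symm_apply, h]

lemma update_spl_symm (k : Fin m) (x y : Fin (I k)) (r) :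
    Function.update ((spl I k).symm (x, r)) k y = (spl I k).symm (y, r) := by
  funext j
  rcases eq_or_ne j k with rfl | h
  · simp [spl_symm_same]
  · simp [Function.update_of_ne h, spl_symm_ne _ _ _ h]

lemma update_spl_symm_ne (k : Fin m) (x : Fin (I k)) (r) (j : {j // j ≠ k})
    (y : Fin (I j.1)) :
    Function.update ((spl I k).symm (x, r)) j.1 y
      = (spl I k).symm (x, Function.update r j y) := by
  obtain ⟨j, hj⟩ := j
  funext l
  rcases eq_or_ne l k with rfl | h
  · simp [Function.update_of_ne (Ne.symm hj), spl_symm_same]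
  · rcases eq_or_ne l j with rfl | h2
    · simp [spl_symm_ne _ _ _ h]
    · have : (⟨l, h⟩ : {j // j ≠ k}) ≠ ⟨j, hj⟩ := by
        simp [h2]
      simp [Function.update_of_ne h2, spl_symm_ne _ _ _ h,
        Function.update_of_ne this]

lemma sum_slice {M : Type*} [AddCommMonoid M] (k : Fin m) (α : Fin (I k))
    (f : ((j : Fin m) → Fin (I j)) → M) :
    ∑ i ∈ Finset.univ.filter (fun i : (j : Fin m) → Fin (I j) => i k = α), f i
      = ∑ r, f ((spl I k).symm (α, r)) := by
  rw [Finset.sum_filter, ← Equiv.sum_comp (spl I k).symm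
      (fun i => if i k = α then f i else 0), Fintype.sum_prod_type]
  simp only [spl_symm_same]
  rw [Finset.sum_comm]
  simp

lemma sliceInner_eq (T : ((j : Fin m) → Fin (I j)) → ℂ) (k : Fin m)
    (α β : Fin (I k)) :
    sliceInner T k α β
      = ∑ r, conj (T ((spl I k).symm (α, r))) * T ((spl I k).symm (β, r)) := by
  rw [sliceInner, sum_slice]
  simp only [update_spl_symm]

lemma sliceNormSq_eq (T : ((j : Fin m) → Fin (I j)) → ℂ) (k : Fin m)
    (α : Fin (I k)) :
    sliceNormSq T k α = ∑ r, ‖T ((spl I k).symm (α, r))‖ ^ 2 := by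
  rw [sliceNormSq, sum_slice]

lemma sliceInner_self (T : ((j : Fin m) → Fin (I j)) → ℂ) (k : Fin m)
    (α : Fin (I k)) :
    sliceInner T k α α = (sliceNormSq T k α : ℂ) := by
  rw [sliceInner_eq, sliceNormSq_eq]
  push_cast
  refine Finset.sum_congr rfl fun r _ => ?_
  rw [Complex.conj_mul']

lemma conj_sliceInner (T : ((j : Fin m) → Fin (I j)) → ℂ) (k : Fin m)
    (α β : Fin (I k)) :
    conj (sliceInner T k α β) = sliceInner T k β α := by
  rw [sliceInner_eq, sliceInner_eq, map_sum]
  refine Finset.sum_congr rfl fun r _ => ?_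
  simp [mul_comm]

lemma modeMul_apply_spl (T : ((j : Fin m) → Fin (I j)) → ℂ) (k : Fin m)
    (B : Matrix (Fin (I k)) (Fin (I k)) ℂ) (x : Fin (I k)) (r) :
    modeMul T k B ((spl I k).symm (x, r))
      = ∑ y, T ((spl I k).symm (y, r)) * B x y := by
  rw [modeMul]
  simp only [update_spl_symm, spl_symm_same]

/-- Lemma A: same-mode transformation of slice inner products. -/
lemma sliceInner_modeMul_same (T : ((j : Fin m) → Fin (I j)) → ℂ) (k : Fin m)
    (B : Matrix (Fin (I k)) (Fin (I k)) ℂ) (α β : Fin (I k)) :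
    sliceInner (modeMul T k B) k α β
      = ∑ x, ∑ y, conj (B α x) * B β y * sliceInner T k x y := by
  have h1 : sliceInner (modeMul T k B) k α β
      = ∑ r, ∑ x, ∑ y, conj (B α x) * B β y
          * (conj (T ((spl I k).symm (x, r))) * T ((spl I k).symm (y, r))) := by
    rw [sliceInner_eq]
    refine Finset.sum_congr rfl fun r _ => ?_
    rw [modeMul_apply_spl, modeMul_apply_spl, map_sum, Finset.sum_mul_sum]
    refine Finset.sum_congr rfl fun x _ => Finset.sum_congr rfl fun y _ => ?_
    simp only [map_mul]
    ring
  rw [h1, Finset.sum_comm]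
  refine Finset.sum_congr rfl fun x _ => ?_
  rw [Finset.sum_comm]
  refine Finset.sum_congr rfl fun y _ => ?_
  rw [sliceInner_eq, Finset.mul_sum]

section psa
variable {ι : Type*} [DecidableEq ι] {π : ι → Type*} (i : ι)

lemma psa_same (x : π i) (r) : (Equiv.piSplitAt i π).symm (x, r) i = x := by
  simp [Equiv.piSplitAt_symm_apply]

lemma psa_update (x y : π i) (r) :
    Function.update ((Equiv.piSplitAt i π).symm (x, r)) i y
      = (Equiv.piSplitAt i π).symm (y, r) := by
  funext j
  rcases eq_or_ne j i with rfl | hj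
  · simp [Equiv.piSplitAt_symm_apply]
  · simp [Equiv.piSplitAt_symm_apply, hj, Function.update_of_ne hj]

end psa

/-- Lemma B: slice inner products in mode `k` are unchanged by a unitary
mode-`k'` multiplication, `k' ≠ k`. -/
lemma sliceInner_modeMul_ne (T : ((j : Fin m) → Fin (I j)) → ℂ) {k k' : Fin m}
    (h : k' ≠ k) (B : Matrix (Fin (I k')) (Fin (I k')) ℂ)
    (hB : star B * B = 1) (α β : Fin (I k)) :
    sliceInner (modeMul T k' B) k α β = sliceInner T k α β := by
  classical
  set F : Fin (I k) → ((j : {j // j ≠ k}) → Fin (I j.1)) → ℂ :=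
    fun x r => T ((spl I k).symm (x, r)) with hF
  set e2 : ((j : {j // j ≠ k}) → Fin (I j.1))
      ≃ Fin (I k') × ((j : {j // (j : {j // j ≠ k}) ≠ ⟨k', h⟩}) → Fin (I j.1.1)) :=
    Equiv.piSplitAt (⟨k', h⟩ : {j // j ≠ k})
      (fun j : {j // j ≠ k} => Fin (I j.1)) with he2
  have hBent : ∀ y z : Fin (I k'), (∑ c, conj (B c y) * B c z)
      = if y = z then (1 : ℂ) else 0 := by
    intro y z
    have h0 := congrFun (congrFun hB y) z
    simpa [Matrix.mul_apply, Matrix.star_apply, Matrix.one_apply,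
      Complex.star_def] using h0
  have happ : ∀ (x : Fin (I k)) (c : Fin (I k')) (s),
      modeMul T k' B ((spl I k).symm (x, e2.symm (c, s)))
        = ∑ y, F x (e2.symm (y, s)) * B c y := by
    intro x c s
    rw [modeMul]
    refine Finset.sum_congr rfl fun y _ => ?_
    rw [show Function.update ((spl I k).symm (x, e2.symm (c, s))) k' y
          = (spl I k).symm (x, Function.update (e2.symm (c, s)) ⟨k', h⟩ y) from
        update_spl_symm_ne k x _ ⟨k', h⟩ y,
      psa_update, spl_symm_ne k x _ h, psa_same]
  calc sliceInner (modeMul T k' B) k α β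
      = ∑ r, conj (modeMul T k' B ((spl I k).symm (α, r)))
          * modeMul T k' B ((spl I k).symm (β, r)) := sliceInner_eq _ _ _ _
    _ = ∑ p : Fin (I k') × _, conj (modeMul T k' B ((spl I k).symm (α, e2.symm p)))
          * modeMul T k' B ((spl I k).symm (β, e2.symm p)) :=
        (Equiv.sum_comp e2.symm fun r => conj (modeMul T k' B ((spl I k).symm (α, r)))
          * modeMul T k' B ((spl I k).symm (β, r))).symm
    _ = ∑ c, ∑ s, ∑ y, ∑ z, (conj (B c y) * B c z)
          * (conj (F α (e2.symm (y, s))) * F β (e2.symm (z, s))) := by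
        rw [Fintype.sum_prod_type]
        refine Finset.sum_congr rfl fun c _ => Finset.sum_congr rfl fun s _ => ?_
        rw [happ, happ, map_sum, Finset.sum_mul_sum]
        refine Finset.sum_congr rfl fun y _ => Finset.sum_congr rfl fun z _ => ?_
        simp only [map_mul]
        ring
    _ = ∑ s, ∑ y, ∑ z, (∑ c, conj (B c y) * B c z)
          * (conj (F α (e2.symm (y, s))) * F β (e2.symm (z, s))) := by
        rw [Finset.sum_comm]
        refine Finset.sum_congr rfl fun s _ => ?_
        rw [Finset.sum_comm]
        refine Finset.sum_congr rfl fun y _ => ?_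
        rw [Finset.sum_comm]
        refine Finset.sum_congr rfl fun z _ => ?_
        rw [Finset.sum_mul]
    _ = ∑ s, ∑ y, conj (F α (e2.symm (y, s))) * F β (e2.symm (y, s)) := by
        refine Finset.sum_congr rfl fun s _ => ?_
        refine Finset.sum_congr rfl fun y _ => ?_
        rw [Finset.sum_eq_single y]
        · rw [hBent, if_pos rfl, one_mul]
        · intro z _ hz
          rw [hBent, if_neg (Ne.symm hz), zero_mul]
        · intro hy; exact absurd (Finset.mem_univ y) hy
    _ = ∑ p : Fin (I k') × _, conj (F α (e2.symm p)) * F β (e2.symm p) := by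
        rw [Fintype.sum_prod_type, Finset.sum_comm]
    _ = ∑ r, conj (F α r) * F β r := Equiv.sum_comp e2.symm fun r => conj (F α r) * F β r
    _ = sliceInner T k α β := (sliceInner_eq _ _ _ _).symm

lemma modeMul_modeMul_same (T : ((j : Fin m) → Fin (I j)) → ℂ) (k : Fin m)
    (B C : Matrix (Fin (I k)) (Fin (I k)) ℂ) :
    modeMul (modeMul T k B) k C = modeMul T k (C * B) := by
  funext i
  simp only [modeMul, Function.update_idem, Function.update_self, Matrix.mul_apply,
    Finset.sum_mul, Finset.mul_sum]
  rw [Finset.sum_comm]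
  exact Finset.sum_congr rfl fun y _ => Finset.sum_congr rfl fun x _ => by ring

lemma modeMul_one (T : ((j : Fin m) → Fin (I j)) → ℂ) (k : Fin m) :
    modeMul T k 1 = T := by
  funext i
  rw [modeMul]
  simp [Matrix.one_apply, eq_comm (a := i k)]

lemma modeMul_comm (T : ((j : Fin m) → Fin (I j)) → ℂ) {k k' : Fin m} (h : k ≠ k')
    (B : Matrix (Fin (I k)) (Fin (I k)) ℂ)
    (C : Matrix (Fin (I k')) (Fin (I k')) ℂ) :
    modeMul (modeMul T k B) k' C = modeMul (modeMul T k' C) k B := by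
  funext i
  simp only [modeMul, Function.update_of_ne h, Function.update_of_ne (Ne.symm h),
    Finset.sum_mul, Finset.mul_sum]
  rw [Finset.sum_comm]
  refine Finset.sum_congr rfl fun x _ => Finset.sum_congr rfl fun y _ => ?_
  rw [Function.update_comm h]
  ring

/-- folded multi-mode product over a list of modes -/
def mmul (L : List (Fin m)) (T : ((j : Fin m) → Fin (I j)) → ℂ)
    (U : (k : Fin m) → Matrix (Fin (I k)) (Fin (I k)) ℂ) :
    ((j : Fin m) → Fin (I j)) → ℂ :=
  L.foldl (fun T k => modeMul T k (U k)) T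

@[simp] lemma mmul_nil (T) (U : (k : Fin m) → Matrix (Fin (I k)) (Fin (I k)) ℂ) :
    mmul [] T U = T := rfl

@[simp] lemma mmul_cons (k : Fin m) (L : List (Fin m)) (T)
    (U : (k : Fin m) → Matrix (Fin (I k)) (Fin (I k)) ℂ) :
    mmul (k :: L) T U = mmul L (modeMul T k (U k)) U := rfl

lemma multiModeMul_eq_mmul (T) (U : (k : Fin m) → Matrix (Fin (I k)) (Fin (I k)) ℂ) :
    multiModeMul T U = mmul (List.finRange m) T U := rfl

lemma modeMul_mmul {L : List (Fin m)} {k : Fin m} (hk : k ∉ L) (T)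
    (U : (k : Fin m) → Matrix (Fin (I k)) (Fin (I k)) ℂ)
    (B : Matrix (Fin (I k)) (Fin (I k)) ℂ) :
    modeMul (mmul L T U) k B = mmul L (modeMul T k B) U := by
  induction L generalizing T with
  | nil => rfl
  | cons j L ih =>
    have hkj : k ≠ j := fun hc => hk (hc ▸ List.mem_cons_self)
    have hkL : k ∉ L := fun hc => hk (List.mem_cons_of_mem j hc)
    rw [mmul_cons, mmul_cons, ih hkL, modeMul_comm T (Ne.symm hkj)]

lemma mmul_mmul {L : List (Fin m)} (hL : L.Nodup) (T)
    (V W : (k : Fin m) → Matrix (Fin (I k)) (Fin (I k)) ℂ) :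
    mmul L (mmul L T W) V = mmul L T (fun k => V k * W k) := by
  induction L generalizing T with
  | nil => rfl
  | cons k L ih =>
    obtain ⟨hkL, hL'⟩ := List.nodup_cons.mp hL
    rw [mmul_cons, mmul_cons, mmul_cons, modeMul_mmul hkL,
      modeMul_modeMul_same, ih hL']

lemma mmul_id {L : List (Fin m)} (T)
    (U : (k : Fin m) → Matrix (Fin (I k)) (Fin (I k)) ℂ)
    (hU : ∀ k ∈ L, U k = 1) :
    mmul L T U = T := by
  induction L generalizing T with
  | nil => rfl
  | cons k L ih =>
    rw [mmul_cons, hU k (List.mem_cons_self), modeMul_one,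
      ih T fun j hj => hU j (List.mem_cons_of_mem k hj)]

lemma sliceInner_mmul_notMem {L : List (Fin m)} {k : Fin m} (hk : k ∉ L) (T)
    (W : (k : Fin m) → Matrix (Fin (I k)) (Fin (I k)) ℂ)
    (hW : ∀ j, star (W j) * W j = 1) (α β : Fin (I k)) :
    sliceInner (mmul L T W) k α β = sliceInner T k α β := by
  induction L generalizing T with
  | nil => rfl
  | cons j L ih =>
    have hkj : j ≠ k := fun hc => hk (hc ▸ List.mem_cons_self)
    have hkL : k ∉ L := fun hc => hk (List.mem_cons_of_mem j hc)
    rw [mmul_cons, ih hkL, sliceInner_modeMul_ne T hkj _ (hW j)]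

lemma sliceInner_mmul_mem {L : List (Fin m)} (hL : L.Nodup) {k : Fin m}
    (hk : k ∈ L) (T)
    (W : (k : Fin m) → Matrix (Fin (I k)) (Fin (I k)) ℂ)
    (hW : ∀ j, star (W j) * W j = 1) (α β : Fin (I k)) :
    sliceInner (mmul L T W) k α β = sliceInner (modeMul T k (W k)) k α β := by
  induction L generalizing T with
  | nil => exact absurd hk (List.not_mem_nil)
  | cons j L ih =>
    obtain ⟨hjL, hL'⟩ := List.nodup_cons.mp hL
    rcases eq_or_ne k j with rfl | hkj
    · rw [mmul_cons, sliceInner_mmul_notMem hjL _ W hW]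
    · have hkL : k ∈ L := (List.mem_cons.mp hk).resolve_left hkj
      rw [mmul_cons, ih hL' hkL, sliceInner_modeMul_same, sliceInner_modeMul_same]
      exact Finset.sum_congr rfl fun x _ => Finset.sum_congr rfl fun y _ => by
        rw [sliceInner_modeMul_ne T (Ne.symm hkj) _ (hW j)]

/-- From the spectral theorem: a Hermitian matrix is unitarily diagonalizable with real
eigenvalues arranged in decreasing order. -/
lemma exists_unitary_diag {n : ℕ} (G : Matrix (Fin n) (Fin n) ℂ)
    (hG : G.IsHermitian) :
    ∃ (V : Matrix (Fin n) (Fin n) ℂ) (e : Fin n → ℝ),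
      V ∈ Matrix.unitaryGroup (Fin n) ℂ ∧
      star V * G * V = Matrix.diagonal (fun a => (e a : ℂ)) ∧
      ∀ a b : Fin n, a ≤ b → e b ≤ e a := by
  classical
  set P : Matrix (Fin n) (Fin n) ℂ := (hG.eigenvectorUnitary : Matrix (Fin n) (Fin n) ℂ)
    with hP
  have hPmem : P ∈ Matrix.unitaryGroup (Fin n) ℂ := hG.eigenvectorUnitary.2
  set σ : Equiv.Perm (Fin n) := Tuple.sort (fun a => -(hG.eigenvalues a)) with hσ
  have hsub : ∀ M : Matrix (Fin n) (Fin n) ℂ,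
      (star P).submatrix ⇑σ id * M * P.submatrix id ⇑σ
        = (star P * M * P).submatrix ⇑σ ⇑σ := by
    intro M
    have h1 : (star P).submatrix ⇑σ id * M
        = (star P * M).submatrix ⇑σ id := by
      have := Matrix.submatrix_mul_equiv (star P) M ⇑σ (Equiv.refl (Fin n)) id
      simpa using this
    have h2 : (star P * M).submatrix ⇑σ id * P.submatrix id ⇑σ
        = (star P * M * P).submatrix ⇑σ ⇑σ := by
      have := Matrix.submatrix_mul_equiv (star P * M) P ⇑σ (Equiv.refl (Fin n)) ⇑σ
      simpa using this
    rw [h1, h2]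
  have hstarsub : star (P.submatrix id ⇑σ) = (star P).submatrix ⇑σ id := by
    rw [Matrix.star_eq_conjTranspose, Matrix.conjTranspose_submatrix,
      ← Matrix.star_eq_conjTranspose]
  refine ⟨P.submatrix id ⇑σ, fun a => hG.eigenvalues (σ a), ?_, ?_, ?_⟩
  · rw [Matrix.mem_unitaryGroup_iff']
    have h3 : star P * P = 1 := Matrix.mem_unitaryGroup_iff'.mp hPmem
    have h4 := hsub 1
    rw [Matrix.mul_one, Matrix.mul_one] at h4
    calc star (P.submatrix id ⇑σ) * P.submatrix id ⇑σ
        = (star P).submatrix ⇑σ id * P.submatrix id ⇑σ := by rw [hstarsub]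
      _ = (star P * P).submatrix ⇑σ ⇑σ := h4
      _ = (1 : Matrix (Fin n) (Fin n) ℂ).submatrix ⇑σ ⇑σ := by rw [h3]
      _ = 1 := Matrix.submatrix_one_equiv σ
  · rw [hstarsub, hsub, show star P * G * P = Matrix.diagonal (RCLike.ofReal ∘ hG.eigenvalues) from
      (Unitary.conjStarAlgAut_star_apply (S := ℂ) _ _).symm.trans
        hG.conjStarAlgAut_star_eigenvectorUnitary]
    ext a b
    rcases eq_or_ne a b with rfl | hab
    · simp [Matrix.diagonal_apply_eq]
    · have : σ a ≠ σ b := fun hc => hab (σ.injective hc)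
      simp [Matrix.diagonal_apply_ne _ hab, Matrix.diagonal_apply_ne _ this,
        Matrix.submatrix_apply]
  · intro a b hab
    have := Tuple.monotone_sort (fun a => -(hG.eigenvalues a)) hab
    simpa using this

end HosvdAux

open HosvdAux in
/-- **Existence of the higher order singular value decomposition (HOSVD).**
Every complex tensor `A` of order `m` and dimensions `I₁ × ⋯ × I_m` can be written as
`A = S ×₁ U⁽¹⁾ ×₂ ⋯ ×ₘ U⁽ᵐ⁾` with each `U⁽ᵏ⁾` a unitary `I_k × I_k` matrix and the core
tensor `S` all-orthogonal and with ordered (nonnegative, decreasing) slice norms. -/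
theorem hosvd_exists {m : ℕ} {I : Fin m → ℕ}
    (A : ((k : Fin m) → Fin (I k)) → ℂ) :
    ∃ (S : ((k : Fin m) → Fin (I k)) → ℂ)
      (U : (k : Fin m) → Matrix (Fin (I k)) (Fin (I k)) ℂ),
      (∀ k, U k ∈ Matrix.unitaryGroup (Fin (I k)) ℂ) ∧
      A = multiModeMul S U ∧
      (∀ (k : Fin m) (α β : Fin (I k)), α ≠ β → sliceInner S k α β = 0) ∧
      (∀ (k : Fin m) (α β : Fin (I k)), α ≤ β → sliceNorm S k β ≤ sliceNorm S k α) ∧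
      (∀ (k : Fin m) (α : Fin (I k)), 0 ≤ sliceNorm S k α) := by
  classical
  set G : (k : Fin m) → Matrix (Fin (I k)) (Fin (I k)) ℂ :=
    fun k => Matrix.of fun α β => sliceInner A k α β with hGdef
  have hG : ∀ k, (G k).IsHermitian := by
    intro k
    rw [Matrix.IsHermitian]
    ext a b
    rw [Matrix.conjTranspose_apply, hGdef]
    exact conj_sliceInner A k b a
  choose V e hVmem hVdiag hVmono using fun k => exists_unitary_diag (G k) (hG k)
  set U : (k : Fin m) → Matrix (Fin (I k)) (Fin (I k)) ℂ :=
    fun k => ((V k).conjTranspose).transpose with hUdef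
  have hstarU : ∀ k, star (U k) = (V k).transpose := by
    intro k
    rw [hUdef, Matrix.star_eq_conjTranspose]
    ext a b
    simp [Matrix.conjTranspose_apply, Matrix.transpose_apply]
  have hUmem : ∀ k, U k ∈ Matrix.unitaryGroup (Fin (I k)) ℂ := by
    intro k
    rw [Matrix.mem_unitaryGroup_iff, hstarU, hUdef, ← Matrix.transpose_mul,
      ← Matrix.star_eq_conjTranspose, Matrix.mem_unitaryGroup_iff.mp (hVmem k),
      Matrix.transpose_one]
  set W : (k : Fin m) → Matrix (Fin (I k)) (Fin (I k)) ℂ :=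
    fun k => star (U k) with hWdef
  have hW : ∀ j, star (W j) * W j = 1 := by
    intro j
    rw [hWdef, star_star]
    exact Matrix.mem_unitaryGroup_iff.mp (hUmem j)
  set S : ((k : Fin m) → Fin (I k)) → ℂ := mmul (List.finRange m) A W with hSdef
  have key : ∀ (k : Fin m) (α β : Fin (I k)),
      sliceInner S k α β = Matrix.diagonal (fun a => ((e k a : ℝ) : ℂ)) α β := by
    intro k α β
    rw [hSdef, sliceInner_mmul_mem (List.nodup_finRange m) (List.mem_finRange k) A W hW,
      sliceInner_modeMul_same]
    have hWk : ∀ a b, W k a b = V k b a := by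
      intro a b
      calc W k a b = star (U k) a b := rfl
        _ = (V k).transpose a b := by rw [hstarU]
        _ = V k b a := rfl
    have hmid : ∑ x, ∑ y, conj (W k α x) * W k β y * sliceInner A k x y
        = (star (V k) * G k * V k) α β := by
      simp only [Matrix.mul_apply, Matrix.star_apply, Finset.sum_mul, hWk]
      rw [Finset.sum_comm]
      refine Finset.sum_congr rfl fun y _ => Finset.sum_congr rfl fun x _ => ?_
      simp only [hGdef, Matrix.of_apply, Complex.star_def]
      ring
    rw [hmid, hVdiag k]
  have hsq : ∀ (k : Fin m) (α : Fin (I k)), sliceNormSq S k α = e k α := by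
    intro k α
    have h1 := key k α α
    rw [sliceInner_self, Matrix.diagonal_apply_eq] at h1
    exact_mod_cast h1
  refine ⟨S, U, hUmem, ?_, ?_, ?_, ?_⟩
  · rw [multiModeMul_eq_mmul, hSdef, mmul_mmul (List.nodup_finRange m),
      mmul_id A _ fun k _ => ?_]
    rw [Matrix.mem_unitaryGroup_iff.mp (hUmem k)]
  · intro k α β hab
    rw [key k α β, Matrix.diagonal_apply_ne _ hab]
  · intro k α β hab
    rw [sliceNorm, sliceNorm]
    refine Real.sqrt_le_sqrt ?_
    rw [hsq, hsq]
    exact hVmono k α β hab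
  · intro k α
    exact Real.sqrt_nonneg _
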